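/- For a processor-sharing Jackson network, i.e., a Whittle network with Φ(n) = ∏_{i=1}^N λ_i^{n_i} for positive constants λ_i, the distribution π(n) = a·∏_{i=1}^N (λ_i ρ_i)^{n_i} satisfies the partial balance equations, where ρ solves the traffic equations; π is a probability distribution provided λ_i ρ_i < 1 for all i, with a = ∏_i (1 - λ_i ρ_i). -/

import Mathlib

open scoped Classical

theorem aux_hasSum (N : ℕ) (r : Fin N → ℝ) (h0 : ∀ i, 0 ≤ r i) (h1 : ∀ i, r i < 1) :
    HasSum (fun n : Fin N → ℕ => ∏ i, r i ^ (n i)) (∏ i, (1 - r i))⁻¹ := by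
  induction N with
  | zero => simpa using hasSum_unique (fun _ : Fin 0 → ℕ => (1:ℝ))
  | succ N ih =>
    have hg : HasSum (fun n : ℕ => r 0 ^ n) (1 - r 0)⁻¹ :=
      hasSum_geometric_of_lt_one (h0 0) (h1 0)
    have hih := ih (fun i => r i.succ) (fun i => h0 _) (fun i => h1 _)
    have hs : Summable fun x : ℕ × (Fin N → ℕ) =>
        r 0 ^ x.1 * ∏ i, r i.succ ^ (x.2 i) := by
      apply Summable.mul_of_nonneg hg.summable hih.summable
      · intro n; exact pow_nonneg (h0 0) _
      · intro n; exact Finset.prod_nonneg fun i _ => pow_nonneg (h0 _) _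
    have hprod := hg.mul hih hs
    rw [← Equiv.hasSum_iff (Fin.consEquiv (fun _ : Fin (N+1) => ℕ))]
    have heq : (fun n : Fin (N+1) → ℕ => ∏ i, r i ^ (n i)) ∘ (Fin.consEquiv (fun _ : Fin (N+1) => ℕ))
        = fun x : ℕ × (Fin N → ℕ) => r 0 ^ x.1 * ∏ i, r i.succ ^ (x.2 i) := by
      funext x
      simp [Fin.consEquiv, Fin.prod_univ_succ]
    rw [heq]
    convert hprod using 1
    · rfl
    rw [Fin.prod_univ_succ, mul_inv]

theorem stmt10 (N : ℕ) (ν : ℝ) (hν : 0 ≤ ν)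
    (p : Fin (N + 1) → Fin (N + 1) → ℝ) (hp : ∀ i j, 0 ≤ p i j)
    (hst : ∀ i, ∑ j, p i j = 1) (hp00 : p 0 0 = 0)
    (lam : Fin N → ℝ) (hlam : ∀ i, 0 < lam i)
    (e : Fin (N + 1) → (Fin N → ℤ))
    (he : ∀ i k, e i k = if (k : ℕ) + 1 = (i : ℕ) then 1 else 0)
    (φ : Fin (N + 1) → Fin (N + 1) → (Fin N → ℤ) → ℝ)
    (hφ0 : ∀ j n, φ 0 j n = ν * p 0 j)
    (hφi : ∀ (i : Fin N) (j : Fin (N + 1)) (n : Fin N → ℤ),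
      φ i.succ j n = if 1 ≤ n i then (lam i)⁻¹ * p i.succ j else 0)
    (ρ : Fin N → ℝ) (hρpos : ∀ i, 0 < ρ i)
    (htr0 : ν = ∑ j, ρ j * p j.succ 0)
    (htr : ∀ i : Fin N, ρ i = ∑ j, ρ j * p j.succ i.succ + ν * p 0 i.succ)
    (hsub : ∀ i, lam i * ρ i < 1)
    (a : ℝ) (ha : a = ∏ i, (1 - lam i * ρ i))
    (π : (Fin N → ℤ) → ℝ)
    (hπ : ∀ n, π n = if ∀ k, 0 ≤ n k then a * ∏ i, (lam i * ρ i) ^ (n i) else 0) :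
    (∀ n : Fin N → ℤ, (∀ k, 0 ≤ n k) → ∀ i,
      π n * ∑ j, φ i j n = ∑ j, π (n - e i + e j) * φ j i (n - e i + e j)) ∧
      HasSum (fun n : Fin N → ℕ => a * ∏ i, (lam i * ρ i) ^ (n i)) 1 := by
  set r : Fin N → ℝ := fun i => lam i * ρ i with hrdef
  have hr : ∀ i, 0 < r i := fun i => mul_pos (hlam i) (hρpos i)
  -- the unrestricted density
  set g : (Fin N → ℤ) → ℝ := fun n => a * ∏ i, r i ^ (n i) with hgdef
  have hπg : ∀ m : Fin N → ℤ, (∀ k, 0 ≤ m k) → π m = g m := by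
    intro m hm
    rw [hπ, if_pos hm]
  have hgshift : ∀ n d : Fin N → ℤ, g (n + d) = g n * ∏ i, r i ^ (d i) := by
    intro n d
    simp only [hgdef, mul_assoc, ← Finset.prod_mul_distrib]
    congr 1
    refine Finset.prod_congr rfl fun i _ => ?_
    rw [Pi.add_apply, zpow_add₀ (hr i).ne']
  -- facts about e
  have he0 : e 0 = 0 := by
    funext k; rw [he]; simp
  have hesucc : ∀ (j : Fin N) (k : Fin N), e j.succ k = if k = j then 1 else 0 := by
    intro j k
    rw [he, Fin.val_succ]
    simp [Fin.ext_iff]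
  have hprodsucc : ∀ j : Fin N, (∏ i, r i ^ (e j.succ i)) = r j := by
    intro j
    rw [Finset.prod_eq_single j]
    · rw [hesucc]; simp
    · intro b _ hb; rw [hesucc, if_neg hb]; simp
    · intro h; exact absurd (Finset.mem_univ j) h
  have hprodneg : ∀ j : Fin N, (∏ i, r i ^ ((-(e j.succ)) i)) = (r j)⁻¹ := by
    intro j
    simp only [Pi.neg_apply]
    rw [Finset.prod_eq_single j]
    · rw [hesucc]; simp
    · intro b _ hb; rw [hesucc, if_neg hb]; simp
    · intro h; exact absurd (Finset.mem_univ j) h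
  have hrholam : ∀ k : Fin N, (r k)⁻¹ * ρ k = (lam k)⁻¹ := by
    intro k
    show (lam k * ρ k)⁻¹ * ρ k = (lam k)⁻¹
    rw [mul_inv, mul_assoc, inv_mul_cancel₀ (hρpos k).ne', mul_one]
  constructor
  · intro n hn i
    induction i using Fin.cases with
    | zero =>
      -- LHS
      have hL : (∑ j, φ 0 j n) = ν := by
        simp only [hφ0, ← Finset.mul_sum, hst 0, mul_one]
      rw [hL, he0]
      rw [Fin.sum_univ_succ]
      have h00 : π (n - 0 + e 0) * φ 0 0 (n - 0 + e 0) = 0 := by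
        rw [hφ0, hp00, mul_zero, mul_zero]
      rw [h00, zero_add]
      have hterm : ∀ k : Fin N, π (n - 0 + e k.succ) * φ k.succ 0 (n - 0 + e k.succ)
          = g n * (ρ k * p k.succ 0) := by
        intro k
        have hm : n - 0 + e k.succ = n + e k.succ := by rw [sub_zero]
        rw [hm]
        have hnn : ∀ t, 0 ≤ (n + e k.succ) t := by
          intro t
          rw [Pi.add_apply, hesucc]
          have := hn t
          split_ifs <;> omega
        have hge : 1 ≤ (n + e k.succ) k := by
          rw [Pi.add_apply, hesucc, if_pos rfl]
          linarith [hn k]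
        rw [hπg _ hnn, hgshift, hprodsucc, hφi, if_pos hge]
        have : r k * ((lam k)⁻¹ * p k.succ 0) = ρ k * p k.succ 0 := by
          show lam k * ρ k * ((lam k)⁻¹ * p k.succ 0) = _
          rw [mul_comm (lam k) (ρ k), mul_assoc, mul_inv_cancel_left₀ (hlam k).ne']
        rw [mul_assoc, this]
      rw [Finset.sum_congr rfl (fun k _ => hterm k), ← Finset.mul_sum, ← htr0,
        hπg n hn]
    | succ k =>
      by_cases hk1 : 1 ≤ n k
      · -- n k ≥ 1
        have hL : (∑ j, φ k.succ j n) = (lam k)⁻¹ := by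
          simp only [hφi, if_pos hk1, ← Finset.mul_sum, hst k.succ, mul_one]
        rw [hL]
        rw [Fin.sum_univ_succ]
        -- j = 0 term
        have hm0 : ∀ t, (n - e k.succ + e 0) t = n t - (if t = k then 1 else 0) := by
          intro t
          rw [he0]
          simp [hesucc]
        have hm0nn : ∀ t, 0 ≤ (n - e k.succ + e 0) t := by
          intro t
          rw [hm0]
          have h1 := hn t
          by_cases htk : t = k
          · subst htk; rw [if_pos rfl]; omega
          · rw [if_neg htk]; omega
        have h0eq : n - e k.succ + e 0 = n + (-(e k.succ)) := by
          rw [he0]; funext t; simp [sub_eq_add_neg]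
        have hterm0 : π (n - e k.succ + e 0) * φ 0 k.succ (n - e k.succ + e 0)
            = g n * (r k)⁻¹ * (ν * p 0 k.succ) := by
          rw [hπg _ hm0nn, hφ0, h0eq, hgshift, hprodneg]
        rw [hterm0]
        -- j = l.succ terms
        have hterm : ∀ l : Fin N, π (n - e k.succ + e l.succ) * φ l.succ k.succ (n - e k.succ + e l.succ)
            = g n * (r k)⁻¹ * (ρ l * p l.succ k.succ) := by
          intro l
          have hmt : ∀ t, (n - e k.succ + e l.succ) t
              = n t - (if t = k then 1 else 0) + (if t = l then 1 else 0) := by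
            intro t; simp [hesucc]
          have hmnn : ∀ t, 0 ≤ (n - e k.succ + e l.succ) t := by
            intro t
            rw [hmt]
            have h1 := hn t
            by_cases htk : t = k
            · subst htk; rw [if_pos rfl]; split_ifs <;> omega
            · rw [if_neg htk]; split_ifs <;> omega
          have hml : 1 ≤ (n - e k.succ + e l.succ) l := by
            rw [hmt, if_pos rfl]
            have h1 := hn l
            by_cases hlk : l = k
            · subst hlk; rw [if_pos rfl]; omega
            · rw [if_neg hlk]; omega
          have heq2 : n - e k.succ + e l.succ = n + (-(e k.succ)) + e l.succ := by
            funext t; simp [sub_eq_add_neg]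
          rw [hπg _ hmnn, hφi, if_pos hml, heq2, hgshift, hgshift, hprodneg, hprodsucc]
          have : r l * ((lam l)⁻¹ * p l.succ k.succ) = ρ l * p l.succ k.succ := by
            show lam l * ρ l * ((lam l)⁻¹ * p l.succ k.succ) = _
            rw [mul_comm (lam l) (ρ l), mul_assoc, mul_inv_cancel_left₀ (hlam l).ne']
          rw [mul_assoc (g n * (r k)⁻¹), this]
        rw [Finset.sum_congr rfl (fun l _ => hterm l), ← Finset.mul_sum]
        rw [← mul_add, add_comm (ν * p 0 k.succ), ← htr k, mul_assoc, hrholam, hπg n hn]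
      · -- n k = 0
        have hnk0 : n k = 0 := le_antisymm (by omega) (hn k)
        have hL : (∑ j, φ k.succ j n) = 0 := by
          apply Finset.sum_eq_zero
          intro j _
          rw [hφi, if_neg hk1]
        rw [hL, mul_zero]
        symm
        rw [Fin.sum_univ_succ]
        have hterm0 : π (n - e k.succ + e 0) = 0 := by
          rw [hπ, if_neg]
          push_neg
          refine ⟨k, ?_⟩
          rw [he0]
          simp [hesucc, hnk0]
        rw [hterm0, zero_mul, zero_add]
        apply Finset.sum_eq_zero
        intro l _
        by_cases hlk : l = k
        · subst hlk
          have : n - e l.succ + e l.succ = n := by ring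
          rw [this, hφi, if_neg hk1, mul_zero]
        · have : π (n - e k.succ + e l.succ) = 0 := by
            rw [hπ, if_neg]
            push_neg
            refine ⟨k, ?_⟩
            simp [hesucc, hnk0, Ne.symm hlk]
          rw [this, zero_mul]
  · have haux := aux_hasSum N r (fun i => (hr i).le) hsub
    have := haux.mul_left a
    have hone : a * (∏ i, (1 - r i))⁻¹ = 1 := by
      rw [ha]
      rw [mul_inv_cancel₀]
      exact Finset.prod_ne_zero_iff.2 fun i _ => by linarith [hsub i, hr i]
    rwa [hone] at this
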